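/- Let J be convex and positively one-homogeneous, and let u_λ be a singular vector with singular value λ > 0, i.e., λK*Ku_λ ∈ ∂J(u_λ) and ‖Ku_λ‖_H = 1. If the data is f = γKu_λ with γ > αλ > 0, then û = (γ − αλ)u_λ is a minimizer of u ↦ (1/2)‖Ku − f‖²_H + αJ(u). -/

import Mathlib

open scoped RealInnerProductSpace

/-- Exact reconstruction of singular vectors from clean data: if
`λ K*K u_λ ∈ ∂J(u_λ)`, `‖K u_λ‖ = 1`, and `f = γ K u_λ` with `γ > αλ > 0`,
then `û = (γ − αλ) u_λ` minimizes `u ↦ ½‖Ku − f‖² + αJ(u)`. -/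
theorem singular_vector_exact_reconstruction_clean_data
    {U H : Type*} [NormedAddCommGroup U] [NormedSpace ℝ U]
    [NormedAddCommGroup H] [InnerProductSpace ℝ H]
    (K : U →L[ℝ] H) (J : U → ℝ) (hJnn : ∀ u, 0 ≤ J u)
    (hconv : ∀ (u v : U) (t : ℝ), 0 ≤ t → t ≤ 1 →
      J (t • u + (1 - t) • v) ≤ t * J u + (1 - t) * J v)
    (hhom : ∀ (c : ℝ), 0 < c → ∀ u, J (c • u) = c * J u)
    (ulam : U) (lam : ℝ) (hlam : 0 < lam) (hnorm : ‖K ulam‖ = 1)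
    (hsv : ∀ v : U, J ulam + lam * ⟪K ulam, K v - K ulam⟫ ≤ J v)
    (γ α : ℝ) (hα : 0 < α) (hγ : α * lam < γ) :
    ∀ u : U,
      (1/2) * ‖K ((γ - α * lam) • ulam) - γ • K ulam‖ ^ 2 + α * J ((γ - α * lam) • ulam)
        ≤ (1/2) * ‖K u - γ • K ulam‖ ^ 2 + α * J u := by
  intro u
  have hc : 0 < γ - α * lam := by linarith
  have hself : ⟪K ulam, K ulam⟫ = 1 := by
    rw [real_inner_self_eq_norm_sq, hnorm]; norm_num
  -- J 0 = 0
  have hJ0 : J (0 : U) = 0 := by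
    have := hhom 2 (by norm_num) (0 : U)
    simp at this; linarith
  -- J ulam = lam
  have h1 : J ulam ≤ lam := by
    have := hsv 0
    simp [hJ0, inner_sub_right, hself] at this
    rw [hnorm, one_pow, mul_one] at this
    linarith
  have h2 : lam ≤ J ulam := by
    have h := hsv ((2 : ℝ) • ulam)
    rw [map_smul] at h
    have hi : ⟪K ulam, (2:ℝ) • K ulam - K ulam⟫ = 1 := by
      rw [inner_sub_right, real_inner_smul_right, hself]; ring
    rw [hi, hhom 2 (by norm_num) ulam] at h
    linarith
  have hJlam : J ulam = lam := le_antisymm h1 h2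
  -- linear lower bound on J
  have hlow : ∀ v : U, lam * ⟪K ulam, K v⟫ ≤ J v := by
    intro v
    have h := hsv v
    rw [inner_sub_right, hself, hJlam] at h
    linarith [h]
  -- simplify the left side
  have hKc : K ((γ - α * lam) • ulam) - γ • K ulam = (-(α * lam)) • K ulam := by
    rw [map_smul]
    rw [← sub_smul]
    ring_nf
  have hLnorm : ‖K ((γ - α * lam) • ulam) - γ • K ulam‖ = α * lam := by
    rw [hKc, norm_smul, hnorm, mul_one, Real.norm_eq_abs, abs_neg,
      abs_of_pos (mul_pos hα hlam)]
  have hJc : J ((γ - α * lam) • ulam) = (γ - α * lam) * lam := by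
    rw [hhom _ hc, hJlam]
  rw [hLnorm, hJc]
  -- expand the right norm
  have hexp : ‖K u - γ • K ulam‖ ^ 2
      = ‖K u‖ ^ 2 - 2 * (γ * ⟪K u, K ulam⟫) + γ ^ 2 := by
    rw [norm_sub_sq_real, real_inner_smul_right, norm_smul, hnorm]
    rw [mul_pow, Real.norm_eq_abs, sq_abs]
    ring
  rw [hexp]
  have hcs : ⟪K u, K ulam⟫ ≤ ‖K u‖ := by
    have := real_inner_le_norm (K u) (K ulam)
    rwa [hnorm, mul_one] at this
  have hJu := hlow u
  rw [real_inner_comm] at hJu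
  nlinarith [sq_nonneg (‖K u‖ - (γ - α * lam)), mul_pos hα hlam, norm_nonneg (K u)]
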